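/- Let Ω be a nonempty set, 0 < p < 1, β > 0, k > 0, M > 0. Let m : Ω → ℝ with |m(x)| ≤ M for all x, and let w : Ω → ℝ be bounded with w > 0 on Ω and ε := inf_{x∈Ω} β/w(x)^p > 0. Let f : [0,∞) → [0,∞) be continuous with f(0) = 0 and lim_{s→∞} f(s)/s^p = 1. Then there exists λ₀ > 0 such that for all λ ≥ λ₀ and all x ∈ Ω: λ^{1/(1−p)}·( m(x)·w(x)^p − β ) ≤ λ·m(x)·( f(λ^{1/(1−p)}·w(x)) − k ). -/

import Mathlib

open MeasureTheory Real Filter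

noncomputable section

theorem stmt9 {Ω : Type*} [Nonempty Ω]
    (p β k M : ℝ) (hp : 0 < p) (hp1 : p < 1) (hβ : 0 < β) (hk : 0 < k) (hM : 0 < M)
    (m w : Ω → ℝ) (hm : ∀ x, |m x| ≤ M)
    (hwpos : ∀ x, 0 < w x) (W : ℝ) (hwW : ∀ x, w x ≤ W)
    (hε : 0 < ⨅ x, β / w x ^ p)
    (f : ℝ → ℝ) (hfc : ContinuousOn f (Set.Ici 0))
    (hfnn : ∀ s, 0 ≤ s → 0 ≤ f s) (hf0 : f 0 = 0)
    (hflim : Tendsto (fun s => f s / s ^ p) atTop (nhds 1)) :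
    ∃ lam₀ > 0, ∀ lam, lam₀ ≤ lam → ∀ x,
      lam ^ (1 / (1 - p)) * (m x * w x ^ p - β)
        ≤ lam * m x * (f (lam ^ (1 / (1 - p)) * w x) - k) := by
  have h1p : (0:ℝ) < 1 - p := by linarith
  obtain ⟨x₀⟩ := ‹Nonempty Ω›
  have hW : 0 < W := lt_of_lt_of_le (hwpos x₀) (hwW x₀)
  have hWp : (0:ℝ) < W ^ p := Real.rpow_pos_of_pos hW p
  set δ : ℝ := β / (2 * M * W ^ p) with hδdef
  have hδ : 0 < δ := by positivity
  obtain ⟨N, hN⟩ := Metric.tendsto_atTop.mp hflim δ hδ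
  set S : ℝ := max N 1 with hSdef
  have hS1 : (1:ℝ) ≤ S := le_max_right _ _
  have hS0 : (0:ℝ) < S := lt_of_lt_of_le one_pos hS1
  have hSb : ∀ s, S ≤ s → |f s / s ^ p - 1| < δ := by
    intro s hs
    have := hN s (le_trans (le_max_left _ _) hs)
    rwa [Real.dist_eq] at this
  obtain ⟨z, hz, hzmax⟩ := (isCompact_Icc (a := (0:ℝ)) (b := S)).exists_isMaxOn
    ⟨0, le_refl _, hS0.le⟩ (hfc.mono (fun t ht => ht.1))
  have hzmax' : ∀ y ∈ Set.Icc (0:ℝ) S, f y ≤ f z := fun y hy => hzmax hy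
  set F : ℝ := f z with hFdef
  have hF0 : 0 ≤ F := hfnn z hz.1
  set A : ℝ := max (2*M*k/β) (2*M*(F + S ^ p)/β) with hAdef
  set B : ℝ := max 1 A with hBdef
  have hB1 : (1:ℝ) ≤ B := le_max_left _ _
  have hB0 : (0:ℝ) < B := lt_of_lt_of_le one_pos hB1
  refine ⟨B ^ ((1-p)/p), Real.rpow_pos_of_pos hB0 _, ?_⟩
  intro lam hlam x
  have hlam0pos : (0:ℝ) < B ^ ((1-p)/p) := Real.rpow_pos_of_pos hB0 _
  have hlampos : (0:ℝ) < lam := lt_of_lt_of_le hlam0pos hlam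
  have hexp : (1-p)/p * (p/(1-p)) = 1 := by field_simp
  have hkey : B ≤ lam ^ (p/(1-p)) := by
    calc B = (B ^ ((1-p)/p)) ^ (p/(1-p)) := by
          rw [← Real.rpow_mul hB0.le, hexp, Real.rpow_one]
      _ ≤ lam ^ (p/(1-p)) := Real.rpow_le_rpow hlam0pos.le hlam (by positivity)
  set L : ℝ := lam ^ (1/(1-p)) with hLdef
  have hLpos : 0 < L := Real.rpow_pos_of_pos hlampos _
  have hwx : 0 < w x := hwpos x
  set s : ℝ := L * w x with hsdef
  have hspos : 0 < s := mul_pos hLpos hwx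
  have hLp : L ^ p = lam ^ (p/(1-p)) := by
    rw [hLdef, ← Real.rpow_mul hlampos.le, one_div, inv_mul_eq_div]
  have hlamL : lam * L ^ p = L := by
    have h1 : lam * lam ^ (p/(1-p)) = lam ^ (1 + p/(1-p)) := by
      rw [Real.rpow_add hlampos, Real.rpow_one]
    have h2 : (1:ℝ) + p/(1-p) = 1/(1-p) := by field_simp; ring
    rw [hLp, h1, h2]
  have hsp : s ^ p = L ^ p * w x ^ p := Real.mul_rpow hLpos.le hwx.le
  have hlamsp : lam * s ^ p = L * w x ^ p := by
    rw [hsp, ← mul_assoc, hlamL]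
  have hLpB : lam * lam ^ (p/(1-p)) = L := by rw [← hLp, hlamL]
  -- (ii)
  have hii : lam * m x * k ≤ L * β / 2 := by
    have h1 : m x ≤ M := le_trans (le_abs_self _) (hm x)
    have h2 : lam * m x * k ≤ lam * M * k :=
      mul_le_mul_of_nonneg_right (mul_le_mul_of_nonneg_left h1 hlampos.le) hk.le
    have h3 : 2*M*k/β ≤ lam ^ (p/(1-p)) :=
      le_trans (le_trans (le_max_left _ _) (le_max_right _ _)) hkey
    have h4 : 2*M*k ≤ lam ^ (p/(1-p)) * β := by
      rw [div_le_iff₀ hβ] at h3; linarith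
    have h5 : lam * (2*M*k) ≤ lam * (lam ^ (p/(1-p)) * β) :=
      mul_le_mul_of_nonneg_left h4 hlampos.le
    have h6 : lam * (lam ^ (p/(1-p)) * β) = L * β := by rw [← mul_assoc, hLpB]
    have h7 : lam * (2*M*k) = 2 * (lam * M * k) := by ring
    linarith
  -- pointwise abs bound
  have habs : ∀ b : ℝ, -(lam * M * |b|) ≤ lam * m x * b := by
    intro b
    have h1 : |lam * m x * b| ≤ lam * M * |b| := by
      rw [abs_mul, abs_mul, abs_of_pos hlampos]
      exact mul_le_mul_of_nonneg_right
        (mul_le_mul_of_nonneg_left (hm x) hlampos.le) (abs_nonneg b)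
    linarith [neg_abs_le (lam * m x * b)]
  -- (i)
  have hi : -(L * β / 2) ≤ lam * m x * (f s - s ^ p) := by
    have hb : lam * M * |f s - s ^ p| ≤ L * β / 2 := by
      rcases le_or_gt S s with hcase | hcase
      · have hsS := (hSb s hcase).le
        have hsppos : 0 < s ^ p := Real.rpow_pos_of_pos hspos p
        have h1 : |f s - s ^ p| ≤ δ * s ^ p := by
          have heq : (f s / s ^ p - 1) * s ^ p = f s - s ^ p := by
            field_simp
          calc |f s - s ^ p| = |(f s / s ^ p - 1) * s ^ p| := by rw [heq]
            _ = |f s / s ^ p - 1| * s ^ p := by rw [abs_mul, abs_of_pos hsppos]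
            _ ≤ δ * s ^ p := mul_le_mul_of_nonneg_right hsS hsppos.le
        have h2 : s ^ p ≤ L ^ p * W ^ p := by
          rw [hsp]
          exact mul_le_mul_of_nonneg_left
            (Real.rpow_le_rpow hwx.le (hwW x) hp.le)
            (Real.rpow_pos_of_pos hLpos p).le
        have h3 : |f s - s ^ p| ≤ δ * (L ^ p * W ^ p) :=
          le_trans h1 (mul_le_mul_of_nonneg_left h2 hδ.le)
        have h4 : lam * M * |f s - s ^ p| ≤ lam * M * (δ * (L ^ p * W ^ p)) :=
          mul_le_mul_of_nonneg_left h3 (mul_pos hlampos hM).le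
        have hδval : M * δ * W ^ p = β / 2 := by
          have hM' : M ≠ 0 := hM.ne'
          have hWp' : W ^ p ≠ 0 := hWp.ne'
          rw [hδdef]; field_simp
        have h5 : lam * M * (δ * (L ^ p * W ^ p)) = L * β / 2 := by
          have : lam * M * (δ * (L ^ p * W ^ p)) = (lam * L ^ p) * (M * δ * W ^ p) := by ring
          rw [this, hlamL, hδval]; ring
        linarith
      · have hsI : s ∈ Set.Icc (0:ℝ) S := ⟨hspos.le, hcase.le⟩
        have hfsF : f s ≤ F := hzmax' s hsI
        have hfs0 : 0 ≤ f s := hfnn s hspos.le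
        have hspS : s ^ p ≤ S ^ p := Real.rpow_le_rpow hspos.le hcase.le hp.le
        have hsp0 : 0 ≤ s ^ p := (Real.rpow_pos_of_pos hspos p).le
        have h1 : |f s - s ^ p| ≤ F + S ^ p := by
          rw [abs_sub_le_iff]
          constructor <;> linarith
        have h3 : 2*M*(F + S ^ p)/β ≤ lam ^ (p/(1-p)) :=
          le_trans (le_trans (le_max_right _ _) (le_max_right _ _)) hkey
        have h4 : 2*M*(F + S ^ p) ≤ lam ^ (p/(1-p)) * β := by
          rw [div_le_iff₀ hβ] at h3; linarith
        have h5 : lam * (2*M*(F + S ^ p)) ≤ lam * (lam ^ (p/(1-p)) * β) :=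
          mul_le_mul_of_nonneg_left h4 hlampos.le
        have h6 : lam * (lam ^ (p/(1-p)) * β) = L * β := by rw [← mul_assoc, hLpB]
        have h7 : lam * (2*M*(F + S ^ p)) = 2 * (lam * M * (F + S ^ p)) := by ring
        have h8 : lam * M * |f s - s ^ p| ≤ lam * M * (F + S ^ p) :=
          mul_le_mul_of_nonneg_left h1 (mul_pos hlampos hM).le
        linarith
    linarith [habs (f s - s ^ p)]
  have hgoal : L * (m x * w x ^ p - β) = lam * m x * s ^ p - L * β := by
    linear_combination (-(m x)) * hlamsp
  rw [hgoal]
  have hexp2 : lam * m x * (f s - k)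
      = lam * m x * (f s - s ^ p) + lam * m x * s ^ p - lam * m x * k := by ring
  rw [hexp2]
  linarith
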